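/- In RG with char R = 4 and G SLC with commutator s and canonical involution *, for n, m ∈ N with n* = sn and m* = sm, the elements (1−s)n and (1−s)m anticommute: (1−s)n·(1−s)m = −(1−s)m·(1−s)n. -/

import Mathlib

/-- in `RG` with `char R = 4` and `G` SLC with commutator `s`
and canonical involution `*`, for `n, m ∈ N` with `n* = sn`, `m* = sm`, the
elements `(1−s)n` and `(1−s)m` anticommute. -/
theorem one_sub_s_elements_anticommute {R : Type*} [CommRing R] {G : Type*} [Group G]
    (hchar : ringChar R = 4)
    (s : G) (hs1 : s ≠ 1) (hsc : s ∈ Subgroup.center G) (hs2 : s ^ 2 = 1)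
    (hcomm : ∀ g h : G, g * h = h * g ∨ g * h = s * (h * g))
    (st : G → G)
    (hstc : ∀ g : G, g ∈ Subgroup.center G → st g = g)
    (hstnc : ∀ g : G, g ∉ Subgroup.center G → st g = s * g)
    (σ : G →* ℤˣ) (hidx : σ.ker.index = 2)
    (n m : G) (hn : n ∈ σ.ker) (hm : m ∈ σ.ker)
    (hstn : st n = s * n) (hstm : st m = s * m) :
    ((1 - MonoidAlgebra.single s (1 : R)) * MonoidAlgebra.single n (1 : R)) *
        ((1 - MonoidAlgebra.single s (1 : R)) * MonoidAlgebra.single m (1 : R)) =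
      -(((1 - MonoidAlgebra.single s (1 : R)) * MonoidAlgebra.single m (1 : R)) *
        ((1 - MonoidAlgebra.single s (1 : R)) * MonoidAlgebra.single n (1 : R))) := by
  set M := MonoidAlgebra R G
  set a : M := MonoidAlgebra.single s (1 : R) with ha
  set x : M := MonoidAlgebra.single n (1 : R) with hx
  set y : M := MonoidAlgebra.single m (1 : R) with hy
  set e : M := 1 - a with he
  have ha2 : a * a = 1 := by
    rw [ha, MonoidAlgebra.single_mul_single, one_mul, ← pow_two, hs2,
      MonoidAlgebra.one_def]
  have hax : ∀ g : G, a * MonoidAlgebra.single g (1 : R)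
      = MonoidAlgebra.single g (1 : R) * a := by
    intro g
    rw [ha, MonoidAlgebra.single_mul_single, MonoidAlgebra.single_mul_single,
      Subgroup.mem_center_iff.mp hsc g]
  have hex : e * x = x * e := by
    rw [he, sub_mul, mul_sub, one_mul, mul_one, hx, hax n]
  have hey : e * y = y * e := by
    rw [he, sub_mul, mul_sub, one_mul, mul_one, hy, hax m]
  have hee : e * e = 2 * e := by
    have h1 : e * e = 1 - a - a + a * a := by
      rw [he]; simp only [sub_mul, mul_sub, one_mul, mul_one]; abel
    rw [h1, ha2, he]; noncomm_ring
  have hea : e * a = -e := by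
    rw [he, sub_mul, one_mul, ha2]; noncomm_ring
  have h4R : (4 : R) = 0 := by
    have := (ringChar.spec R 4).mpr (by rw [hchar])
    simpa using this
  have h4 : (4 : M) = 0 := by
    have : (4 : M) = algebraMap R M (4 : R) := (map_ofNat (algebraMap R M) 4).symm
    rw [this, h4R, map_zero]
  have key : ∀ u v : M, e * u = u * e → e * v = v * e →
      e * u * (e * v) = e * e * (u * v) := by
    intro u v hu hv
    calc e * u * (e * v) = e * (u * e) * v := by noncomm_ring
      _ = e * (e * u) * v := by rw [hu]
      _ = e * e * (u * v) := by noncomm_ring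
  rw [key x y hex hey, key y x hey hex, hee]
  rcases hcomm n m with h | h
  · have hxy : x * y = y * x := by
      rw [hx, hy, MonoidAlgebra.single_mul_single, MonoidAlgebra.single_mul_single, h]
    rw [hxy]
    have : 2 * e * (y * x) + 2 * e * (y * x) = 4 * (e * (y * x)) := by noncomm_ring
    have hz : 2 * e * (y * x) + 2 * e * (y * x) = 0 := by rw [this, h4, zero_mul]
    exact eq_neg_of_add_eq_zero_left hz
  · have hxy : x * y = a * (y * x) := by
      rw [hx, hy, MonoidAlgebra.single_mul_single, MonoidAlgebra.single_mul_single, h,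
        ha, MonoidAlgebra.single_mul_single, one_mul, mul_one]
    calc 2 * e * (x * y) = 2 * (e * a) * (y * x) := by rw [hxy]; noncomm_ring
      _ = 2 * (-e) * (y * x) := by rw [hea]
      _ = -(2 * e * (y * x)) := by rw [mul_neg, neg_mul]
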